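/- Consider model (6) (m₂₁ = m₃₁ = m₂₃ = 0) with all remaining parameters positive and r₃ > m₁₃. Define β = (k₃/r₃)(r₃ − m₁₃) and α = (k₁/2)(1 + sqrt(1 + 4m₁₃k₃(r₃ − m₁₃)/(r₁r₃k₁))). Then (α, 0, β) is an equilibrium with α, β > 0, and the Jacobian there has eigenvalues J₁₁ = −(r₁/k₁)α − m₁₃β/α < 0, J₂₂ = r₂ − m₁₂ − m₃₂, J₃₃ = −(r₃/k₃)β < 0; hence (α,0,β) is locally asymptotically stable if and only if r₂ < m₁₂ + m₃₂. -/

import Mathlib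

set_option maxHeartbeats 1000000


open Matrix in
/-- Model (6): `I₃ = (α, 0, β)` is an equilibrium with positive components,
the Jacobian there has eigenvalues `−(r₁/k₁)α − m₁₃β/α < 0`,
`r₂ − m₁₂ − m₃₂`, `−(r₃/k₃)β < 0`; hence `I₃` is locally asymptotically
stable iff `r₂ < m₁₂ + m₃₂`. -/
theorem model6_I3_equilibrium_stability
    (r₁ r₂ r₃ k₁ k₂ k₃ m₁₂ m₁₃ m₃₂ : ℝ)
    (hr₁ : 0 < r₁) (hr₂ : 0 < r₂) (hr₃ : 0 < r₃)
    (hk₁ : 0 < k₁) (hk₂ : 0 < k₂) (hk₃ : 0 < k₃)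
    (hm₁₂ : 0 < m₁₂) (hm₁₃ : 0 < m₁₃) (hm₃₂ : 0 < m₃₂)
    (hfeas : m₁₃ < r₃)
    (α β : ℝ)
    (hβ : β = (k₃ / r₃) * (r₃ - m₁₃))
    (hα : α = (k₁ / 2) *
      (1 + Real.sqrt (1 + 4 * m₁₃ * k₃ * (r₃ - m₁₃) / (r₁ * r₃ * k₁))))
    (J : Matrix (Fin 3) (Fin 3) ℝ)
    (hJ : J = !![r₁ - 2 * r₁ * α / k₁, m₁₂, m₁₃;
                 0, r₂ - (m₃₂ + m₁₂), 0;
                 0, m₃₂, r₃ - 2 * r₃ * β / k₃ - m₁₃]) :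
    0 < α ∧ 0 < β ∧
    (r₁ * α * (1 - α / k₁) + m₁₂ * 0 + m₁₃ * β = 0 ∧
     r₂ * 0 * (1 - 0 / k₂) - (m₃₂ + m₁₂) * 0 = 0 ∧
     r₃ * β * (1 - β / k₃) + m₃₂ * 0 - m₁₃ * β = 0) ∧
    J 0 0 = -(r₁ / k₁) * α - m₁₃ * β / α ∧ J 0 0 < 0 ∧
    J 1 1 = r₂ - m₁₂ - m₃₂ ∧
    J 2 2 = -(r₃ / k₃) * β ∧ J 2 2 < 0 ∧
    ((∀ μ ∈ spectrum ℂ (J.map (Complex.ofReal)), μ.re < 0) ↔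
      r₂ < m₁₂ + m₃₂) := by
  have hrm : 0 < r₃ - m₁₃ := by linarith
  have hargpos : (0:ℝ) ≤ 1 + 4 * m₁₃ * k₃ * (r₃ - m₁₃) / (r₁ * r₃ * k₁) := by positivity
  set s : ℝ := Real.sqrt (1 + 4 * m₁₃ * k₃ * (r₃ - m₁₃) / (r₁ * r₃ * k₁)) with hs_def
  have hs0 : 0 ≤ s := Real.sqrt_nonneg _
  have hs2 : s ^ 2 = 1 + 4 * m₁₃ * k₃ * (r₃ - m₁₃) / (r₁ * r₃ * k₁) := Real.sq_sqrt hargpos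
  have hαpos : 0 < α := by rw [hα]; positivity
  have hβpos : 0 < β := by rw [hβ]; positivity
  have hαne : α ≠ 0 := ne_of_gt hαpos
  -- the key equilibrium identity for the first coordinate
  have heq1 : r₁ * α * (1 - α / k₁) + m₁₂ * 0 + m₁₃ * β = 0 := by
    have hs2' : s ^ 2 * (r₁ * r₃ * k₁) = r₁ * r₃ * k₁ + 4 * m₁₃ * k₃ * (r₃ - m₁₃) := by
      rw [hs2]; field_simp
    rw [hα, hβ]
    field_simp
    linear_combination (-1) * hs2'
  have heq3 : r₃ * β * (1 - β / k₃) + m₃₂ * 0 - m₁₃ * β = 0 := by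
    rw [hβ]; field_simp; ring
  -- Jacobian entries
  have hJ00 : J 0 0 = r₁ - 2 * r₁ * α / k₁ := by rw [hJ]; simp
  have hJ11 : J 1 1 = r₂ - (m₃₂ + m₁₂) := by rw [hJ]; simp
  have hJ22 : J 2 2 = r₃ - 2 * r₃ * β / k₃ - m₁₃ := by rw [hJ]; simp
  have hJ00' : J 0 0 = -(r₁ / k₁) * α - m₁₃ * β / α := by
    rw [hJ00]
    have h : r₁ * α * (1 - α / k₁) = -(m₁₃ * β) := by linarith [heq1]
    field_simp at h ⊢
    nlinarith [h]
  have hJ00neg : J 0 0 < 0 := by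
    rw [hJ00']
    have h1 : 0 < (r₁ / k₁) * α := by positivity
    have h2 : 0 < m₁₃ * β / α := by positivity
    linarith
  have hJ22' : J 2 2 = -(r₃ / k₃) * β := by
    rw [hJ22, hβ]; field_simp; ring
  have hJ22neg : J 2 2 < 0 := by
    rw [hJ22']
    have : 0 < (r₃ / k₃) * β := by positivity
    linarith
  refine ⟨hαpos, hβpos, ⟨heq1, by ring, heq3⟩, hJ00', hJ00neg, by rw [hJ11]; ring,
    hJ22', hJ22neg, ?_⟩
  -- spectrum
  set a : ℝ := r₁ - 2 * r₁ * α / k₁ with ha_def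
  set c : ℝ := r₃ - 2 * r₃ * β / k₃ - m₁₃ with hc_def
  have hspec : ∀ μ : ℂ, μ ∈ spectrum ℂ (J.map Complex.ofReal) ↔
      (μ = a ∨ μ = (r₂ - (m₃₂ + m₁₂) : ℝ) ∨ μ = c) := by
    intro μ
    rw [spectrum.mem_iff, Matrix.isUnit_iff_isUnit_det, isUnit_iff_ne_zero, not_ne_iff,
      Algebra.algebraMap_eq_smul_one]
    have h : μ • (1 : Matrix (Fin 3) (Fin 3) ℂ) - J.map Complex.ofReal
        = !![μ - a, -m₁₂, -m₁₃; 0, μ - (r₂ - (m₃₂ + m₁₂) : ℝ), 0;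
             0, -m₃₂, μ - c] := by
      rw [hJ]
      ext i j
      fin_cases i <;> fin_cases j <;>
        simp [Matrix.one_apply, Matrix.vecHead, Matrix.vecTail]
    rw [h, Matrix.det_fin_three]
    simp [Matrix.vecHead, Matrix.vecTail, sub_eq_zero, mul_eq_zero]
    tauto
  have haneg : a < 0 := by rw [← hJ00]; exact hJ00neg
  have hcneg : c < 0 := by rw [← hJ22]; exact hJ22neg
  constructor
  · intro hall
    have hmem : ((r₂ - (m₃₂ + m₁₂) : ℝ) : ℂ) ∈ spectrum ℂ (J.map Complex.ofReal) := by
      rw [hspec]; tauto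
    have := hall _ hmem
    simp at this
    linarith
  · intro hlt μ hμ
    rcases (hspec μ).mp hμ with h | h | h <;> subst h <;> simp
    · exact haneg
    · linarith
    · exact hcneg
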